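/- Let S be a closed symmetric operator with non-dense domain in a complex Hilbert space H, set H₀ := closure(dom S), and assume H₀^⊥ is finite-dimensional and nonzero. Let S̃ be a densely defined maximal dissipative extension of S in H with Hilbert-space adjoint S̃*. Let S̃₀ be the compression of S̃ to H₀ (domain dom S̃ ∩ H₀, acting as x ↦ P_{H₀}(S̃x)) and let S̃_{*0} be the compression of S̃* to H₀. Then dom S̃₀ is dense in H₀ and S̃_{*0} = (S̃₀)*, the adjoint being computed in the Hilbert space H₀. -/

import Mathlib

set_option synthInstance.maxHeartbeats 1000000

open scoped ComplexInnerProductSpace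

variable {H : Type*} [NormedAddCommGroup H] [InnerProductSpace ℂ H] [CompleteSpace H]

/-- The compression of an operator `T` in `H` to a closed subspace `K`: the operator in the
Hilbert space `K` with domain `dom T ∩ K` acting as `x ↦ P_K (T x)`. -/
noncomputable def compression (K : Submodule ℂ H) [CompleteSpace K] (T : H →ₗ.[ℂ] H) :
    (↥K) →ₗ.[ℂ] (↥K) where
  domain := T.domain.comap K.subtype
  toFun := K.orthogonalProjectionOnto.toLinearMap ∘ₗ T.toFun ∘ₗ
    ((K.subtype.domRestrict (T.domain.comap K.subtype)).codRestrict T.domain fun x => x.2)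

/-- A dissipative operator: `Im (Tf, f) ≥ 0` for all `f ∈ dom T`, where `(·,·)` is the classical
inner product (linear in the first argument), i.e. `⟪f, Tf⟫` in Mathlib's convention. -/
def LinearPMap.IsDissipative {E : Type*} [NormedAddCommGroup E] [InnerProductSpace ℂ E]
    (T : E →ₗ.[ℂ] E) : Prop :=
  ∀ x : T.domain, 0 ≤ (⟪(x : E), T x⟫).im

/-- A maximal dissipative operator: dissipative with no proper dissipative extension. -/
def LinearPMap.IsMaximalDissipative {E : Type*} [NormedAddCommGroup E] [InnerProductSpace ℂ E]
    (T : E →ₗ.[ℂ] E) : Prop :=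
  T.IsDissipative ∧ ∀ T' : E →ₗ.[ℂ] E, T'.IsDissipative → T ≤ T' → T' = T

set_option linter.unusedSectionVars false

lemma compression_apply (K : Submodule ℂ H) [CompleteSpace K] (T : H →ₗ.[ℂ] H)
    (x : (compression K T).domain) :
    compression K T x = K.orthogonalProjectionOnto (T ⟨((x : K) : H), x.2⟩) := rfl

lemma inner_proj_right {K : Submodule ℂ H} [CompleteSpace K] (v : H) (hv : v ∈ K) (w : H) :
    ⟪v, ((K.orthogonalProjectionOnto w : K) : H)⟫ = ⟪v, w⟫ := by
  have h := Submodule.sub_starProjection_mem_orthogonal (K := K) w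
  have h0 : ⟪v, w - (K.orthogonalProjectionOnto w : H)⟫ = 0 :=
    Submodule.inner_right_of_mem_orthogonal hv h
  rw [inner_sub_right, sub_eq_zero] at h0
  exact h0.symm

lemma inner_proj_left {K : Submodule ℂ H} [CompleteSpace K] (v : H) (hv : v ∈ K) (w : H) :
    ⟪((K.orthogonalProjectionOnto w : K) : H), v⟫ = ⟪w, v⟫ := by
  rw [← inner_conj_symm, inner_proj_right v hv w, inner_conj_symm]

/-- Let `S` be a closed symmetric operator with non-dense domain in a complex
Hilbert space, `H₀ = closure (dom S)` with `H₀ᗮ` finite-dimensional and nonzero, and let `S̃` be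
a densely defined maximal dissipative extension of `S`.  Then the compression `S̃₀` of `S̃` to
`H₀` is densely defined in `H₀` and the compression of `S̃*` to `H₀` equals `(S̃₀)*`, the
adjoint being computed in the Hilbert space `H₀`. -/
theorem compression_adjoint_eq_adjoint_compression
    (S : H →ₗ.[ℂ] H)
    (hsym : ∀ x y : S.domain, ⟪S x, (y : H)⟫ = ⟪(x : H), S y⟫)
    (hclosed : S.IsClosed)
    (hnd : ¬ Dense (S.domain : Set H))
    (hfin : FiniteDimensional ℂ ↥(S.domainᗮ)) (hne : S.domainᗮ ≠ ⊥)
    (St : H →ₗ.[ℂ] H) (hext : S ≤ St)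
    (hdense : Dense (St.domain : Set H))
    (hmax : St.IsMaximalDissipative) :
    Dense ((compression S.domain.topologicalClosure St).domain :
        Set ↥(S.domain.topologicalClosure)) ∧
      compression S.domain.topologicalClosure St.adjoint =
        (compression S.domain.topologicalClosure St).adjoint := by
  classical
  set K : Submodule ℂ H := S.domain.topologicalClosure with hK
  set T0 : (↥K) →ₗ.[ℂ] (↥K) := compression K St with hT0def
  -- density of the compressed domain
  have hdense0 : Dense (T0.domain : Set ↥K) := by
    intro x
    rw [closure_subtype]
    have hx : (x : H) ∈ closure (S.domain : Set H) := x.2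
    refine closure_mono ?_ hx
    intro y hy
    have hyK : y ∈ K := Submodule.le_topologicalClosure _ hy
    have hyD : (⟨y, hyK⟩ : ↥K) ∈ T0.domain := hext.1 hy
    exact ⟨⟨y, hyK⟩, hyD, rfl⟩
  refine ⟨hdense0, ?_⟩
  -- the easy inclusion, via formal adjointness
  have haf := LinearPMap.adjoint_isFormalAdjoint hdense
  have hfa : T0.IsFormalAdjoint (compression K St.adjoint) := by
    intro x y
    have h : ⟪St.adjoint ⟨(((y : ↥K)) : H), y.2⟩, (((x : ↥K)) : H)⟫
        = ⟪(((y : ↥K)) : H), St ⟨(((x : ↥K)) : H), x.2⟩⟫ := haf ⟨_, y.2⟩ ⟨_, x.2⟩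
    have e1 : (⟪T0 x, ((y : ↥K))⟫ : ℂ)
        = ⟪(St ⟨(((x : ↥K)) : H), x.2⟩ : H), (((y : ↥K)) : H)⟫ :=
      inner_proj_left _ (y : ↥K).2 _
    have e2 : (⟪((x : ↥K)), compression K St.adjoint y⟫ : ℂ)
        = ⟪(((x : ↥K)) : H), (St.adjoint ⟨(((y : ↥K)) : H), y.2⟩ : H)⟫ :=
      inner_proj_right _ (x : ↥K).2 _
    have m : ⟪(St ⟨(((x : ↥K)) : H), x.2⟩ : H), (((y : ↥K)) : H)⟫
        = ⟪(((x : ↥K)) : H), (St.adjoint ⟨(((y : ↥K)) : H), y.2⟩ : H)⟫ := by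
      rw [← inner_conj_symm, ← h, inner_conj_symm]
    exact e1.trans (m.trans e2.symm)
  have hle : compression K St.adjoint ≤ T0.adjoint := hfa.le_adjoint hdense0
  refine LinearPMap.eq_of_le_of_domain_eq hle (le_antisymm hle.1 ?_)
  intro v hv
  show (K.subtype v) ∈ St.adjoint.domain
  rw [LinearPMap.mem_adjoint_domain_iff]
  have horth : Kᗮ = S.domainᗮ := by
    refine le_antisymm (Submodule.orthogonal_le (Submodule.le_topologicalClosure _)) ?_
    rw [hK, ← Submodule.orthogonal_orthogonal_eq_closure]
    exact Submodule.le_orthogonal_orthogonal _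
  haveI hfinN : FiniteDimensional ℂ ↥Kᗮ := by rw [horth]; exact hfin
  let ψ : ↥T0.domain →L[ℂ] ℂ := ⟨(innerₛₗ ℂ v).comp T0.toFun, hv⟩
  let qc : ↥St.domain →L[ℂ] ↥Kᗮ :=
    (Kᗮ.orthogonalProjectionOnto).comp (Submodule.subtypeL St.domain)
  let q : ↥St.domain →ₗ[ℂ] ↥Kᗮ := qc.toLinearMap
  obtain ⟨r, hr⟩ := q.rangeRestrict.exists_rightInverse_of_surjective q.range_rangeRestrict
  let rC : ↥(LinearMap.range q) →L[ℂ] ↥St.domain := ⟨r, r.continuous_of_finiteDimensional⟩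
  let g : ↥(LinearMap.range q) →ₗ[ℂ] ℂ := (innerₛₗ ℂ ((v : H))).comp (St.toFun.comp r)
  let gC : ↥(LinearMap.range q) →L[ℂ] ℂ := ⟨g, g.continuous_of_finiteDimensional⟩
  have key : ∀ z : ↥St.domain, ((z : H) ∈ K) → ‖(⟪(v : H), (St z : H)⟫ : ℂ)‖ ≤ ‖ψ‖ * ‖z‖ := by
    intro z hz
    have hzT : (⟨(z : H), hz⟩ : ↥K) ∈ T0.domain := z.2
    have h1 : (⟪(v : H), (St z : H)⟫ : ℂ) = ψ ⟨⟨(z : H), hz⟩, hzT⟩ :=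
      (inner_proj_right (v : H) v.2 (St z : H)).symm
    have hnorm : ‖(⟨⟨(z : H), hz⟩, hzT⟩ : ↥T0.domain)‖ = ‖z‖ := rfl
    rw [h1]
    calc ‖ψ ⟨⟨(z : H), hz⟩, hzT⟩‖ ≤ ‖ψ‖ * ‖(⟨⟨(z : H), hz⟩, hzT⟩ : ↥T0.domain)‖ :=
          ψ.le_opNorm _
      _ = ‖ψ‖ * ‖z‖ := by rw [hnorm]
  have hb : ∀ x : ↥St.domain, ‖((innerₛₗ ℂ (v : H)).comp St.toFun) x‖
      ≤ (‖ψ‖ * (1 + ‖rC‖ * ‖qc‖) + ‖gC‖ * ‖qc‖) * ‖x‖ := by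
    intro x
    set u : ↥St.domain := r (q.rangeRestrict x) with hu
    have hqu : q.rangeRestrict u = q.rangeRestrict x := by
      have h9 := LinearMap.congr_fun hr (q.rangeRestrict x)
      exact h9
    have hxu : ((x - u : ↥St.domain) : H) ∈ K := by
      have h0 : Kᗮ.orthogonalProjectionOnto ((x - u : ↥St.domain) : H) = 0 := by
        have h4 : q x = q u := (congrArg Subtype.val hqu).symm
        have hq : q (x - u) = 0 := by rw [map_sub, h4, sub_self]
        exact hq
      have h5 := Submodule.orthogonalProjectionOnto_eq_zero_iff.mp h0
      rwa [Submodule.orthogonal_orthogonal] at h5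
    have split : ((innerₛₗ ℂ (v : H)).comp St.toFun) x
        = ⟪(v : H), (St (x - u) : H)⟫ + ⟪(v : H), (St u : H)⟫ := by
      show (⟪(v : H), (St x : H)⟫ : ℂ) = _
      rw [← inner_add_right, ← LinearPMap.map_add, sub_add_cancel]
    have t1 : ‖(⟪(v : H), (St (x - u) : H)⟫ : ℂ)‖ ≤ ‖ψ‖ * (‖x‖ + ‖u‖) :=
      (key (x - u) hxu).trans
        (mul_le_mul_of_nonneg_left (norm_sub_le _ _) (norm_nonneg ψ))
    have hqx : ‖q.rangeRestrict x‖ ≤ ‖qc‖ * ‖x‖ := qc.le_opNorm x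
    have hu_le : ‖u‖ ≤ ‖rC‖ * (‖qc‖ * ‖x‖) :=
      (rC.le_opNorm (q.rangeRestrict x)).trans
        (mul_le_mul_of_nonneg_left hqx (norm_nonneg rC))
    have t2 : ‖(⟪(v : H), (St u : H)⟫ : ℂ)‖ ≤ ‖gC‖ * (‖qc‖ * ‖x‖) := by
      have h7 : (⟪(v : H), (St u : H)⟫ : ℂ) = gC (q.rangeRestrict x) := rfl
      rw [h7]
      exact (gC.le_opNorm _).trans (mul_le_mul_of_nonneg_left hqx (norm_nonneg gC))
    have h8 : ‖ψ‖ * ‖u‖ ≤ ‖ψ‖ * (‖rC‖ * (‖qc‖ * ‖x‖)) :=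
      mul_le_mul_of_nonneg_left hu_le (norm_nonneg ψ)
    calc ‖((innerₛₗ ℂ (v : H)).comp St.toFun) x‖
        = ‖(⟪(v : H), (St (x - u) : H)⟫ : ℂ) + ⟪(v : H), (St u : H)⟫‖ := by rw [split]
      _ ≤ ‖(⟪(v : H), (St (x - u) : H)⟫ : ℂ)‖ + ‖(⟪(v : H), (St u : H)⟫ : ℂ)‖ :=
          norm_add_le _ _
      _ ≤ (‖ψ‖ * (‖x‖ + ‖u‖)) + ‖gC‖ * (‖qc‖ * ‖x‖) := add_le_add t1 t2
      _ ≤ (‖ψ‖ * (1 + ‖rC‖ * ‖qc‖) + ‖gC‖ * ‖qc‖) * ‖x‖ := by nlinarith [h8]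
  exact AddMonoidHomClass.continuous_of_bound ((innerₛₗ ℂ ((K.subtype v))).comp St.toFun) _ hb
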